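/- Let m ≥ 3 be odd, d a positive integer, Tr the absolute trace of 𝔽_{2^m} over 𝔽_2, and D₁ = { (x,y) ∈ 𝔽_{2^m}^* × 𝔽_{2^m} : Tr(x^{d+1} y + x^d y + x) = 0 }. For (a,b) ∈ 𝔽_{2^m}² with (a,b) ≠ (0,0), the Hamming weight of the codeword c(a,b) = (Tr(a x^d y + b x))_{(x,y) ∈ D₁} equals: 2^{m−2}(2^m − 3) if a ∉ {0,1} and Tr((a+1)(b+1)) = 0; 2^{m−1}(2^{m−1} − 1) if a = 1, or if a = 0, b ≠ 0 and Tr(b+1) = 0; 2^{m−2}(2^m − 1) if a ∉ {0,1} and Tr((a+1)(b+1)) = 1; and 2^{2m−2} if a = 0, b ≠ 0 and Tr(b+1) = 1. -/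
import Mathlib
open Finset
open scoped Classical
variable {F : Type*} [Field F] [Fintype F] [Algebra (ZMod 2) F]

noncomputable def Tr (z : F) : ZMod 2 := Algebra.trace (ZMod 2) F z

lemma Tr_add (x y : F) : Tr (x + y) = Tr x + Tr y := map_add (Algebra.trace (ZMod 2) F) x y
lemma Tr_zero : Tr (0 : F) = 0 := map_zero (Algebra.trace (ZMod 2) F)

lemma finrank_eq (m : ℕ) (hF : Fintype.card F = 2 ^ m) : Module.finrank (ZMod 2) F = m := by
  have := Module.card_eq_pow_finrank (K := ZMod 2) (V := F)
  rw [hF, ZMod.card] at this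
  exact (Nat.pow_right_injective le_rfl this.symm)

lemma Tr_one (m : ℕ) (hmo : Odd m) (hF : Fintype.card F = 2 ^ m) : Tr (1 : F) = 1 := by
  have h := Algebra.trace_algebraMap (R := ZMod 2) (S := F) 1
  unfold Tr
  rw [map_one] at h
  rw [h, finrank_eq m hF]
  obtain ⟨k, hk⟩ := hmo
  subst hk
  simp only [nsmul_eq_mul, mul_one]
  push_cast
  rw [show (2:ZMod 2) = 0 by decide]
  ring

lemma z01 (z : ZMod 2) : z = 0 ∨ z = 1 := by
  revert z; decide

lemma two_eq_zero : (2 : F) = 0 := by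
  rw [show (2:F) = algebraMap (ZMod 2) F 2 from (map_ofNat _ 2).symm,
      show (2 : ZMod 2) = 0 from by decide, map_zero]

noncomputable def trmul (u : F) : F →+ ZMod 2 where
  toFun := fun y => Tr (u * y)
  map_zero' := by show Tr (u * 0) = 0; rw [mul_zero]; exact Tr_zero
  map_add' := fun x y => by show Tr (u * (x + y)) = _; rw [mul_add]; exact Tr_add _ _

lemma exists_one_zero (m : ℕ) (hmo : Odd m) (hF : Fintype.card F = 2 ^ m)
    (u v : F) (hu : u ≠ 0) (hv : v ≠ 0) (huv : u ≠ v) :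
    ∃ y : F, Tr (u * y) = 1 ∧ Tr (v * y) = 0 := by
  have key : ∀ w : F, w ≠ 0 → Tr (w * w⁻¹) = 1 := fun w hw => by
    rw [mul_inv_cancel₀ hw]; exact Tr_one m hmo hF
  rcases z01 (Tr (v * u⁻¹)) with h | h
  · exact ⟨u⁻¹, key u hu, h⟩
  · have hsum : u + v ≠ 0 := by
      intro hh
      apply huv
      have h2v : v + v = 0 := by
        rw [show (v + v : F) = 2 * v by ring, two_eq_zero, zero_mul]
      linear_combination hh - h2v
    set w := (u + v)⁻¹ with hw
    have hsplit : Tr (u * w) + Tr (v * w) = 1 := by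
      rw [← Tr_add, ← add_mul]
      exact key _ hsum
    rcases z01 (Tr (u * w)) with h1 | h1
    · refine ⟨u⁻¹ + w, ?_, ?_⟩
      · rw [mul_add, Tr_add, key u hu, h1]; decide
      · rw [mul_add, Tr_add, h]
        have h2 : Tr (v * w) = 1 := by rw [h1, zero_add] at hsplit; exact hsplit
        rw [h2]; decide
    · refine ⟨w, h1, ?_⟩
      rw [h1] at hsplit
      have : ∀ b : ZMod 2, 1 + b = 1 → b = 0 := by decide
      exact this _ hsplit


lemma fiber_card_mul {G : Type*} [AddCommGroup G] [Fintype G] [DecidableEq G]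
    (f : F →+ G) (hf : Function.Surjective f) (g : G) :
    (univ.filter fun y => f y = g).card * Fintype.card G = Fintype.card F := by
  have key : ∀ g' : G, (univ.filter fun y => f y = g').card
      = (univ.filter fun y => f y = g).card := by
    intro g'
    obtain ⟨z, hz⟩ := hf (g' - g)
    apply Finset.card_bij (fun y _ => y - z)
    · intro y hy
      simp only [mem_filter, mem_univ, true_and] at hy ⊢
      rw [map_sub, hy, hz]; abel
    · intro y1 h1 y2 h2 h
      exact sub_left_injective h
    · intro y hy
      simp only [mem_filter, mem_univ, true_and] at hy ⊢
      exact ⟨y + z, by rw [map_add, hy, hz]; abel, by abel⟩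
  have h2 : Fintype.card F = ∑ g' : G, (univ.filter fun y => f y = g').card := by
    rw [← Finset.card_univ]
    exact Finset.card_eq_sum_card_fiberwise (fun x _ => mem_univ _)
  rw [h2]
  simp only [key]
  rw [Finset.sum_const, Finset.card_univ, smul_eq_mul, mul_comm]

lemma count_one (m : ℕ) (hmo : Odd m) (hF : Fintype.card F = 2 ^ m) (hm : 1 ≤ m)
    (u : F) (hu : u ≠ 0) (s : ZMod 2) :
    (univ.filter fun y => Tr (u * y) = s).card = 2 ^ (m - 1) := by
  have hsurj : Function.Surjective (trmul u) := by
    intro t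
    rcases z01 t with ht | ht
    · exact ⟨0, by rw [map_zero, ht]⟩
    · refine ⟨u⁻¹, ?_⟩
      show Tr (u * u⁻¹) = t
      rw [mul_inv_cancel₀ hu, Tr_one m hmo hF, ht]
  have h := fiber_card_mul (trmul u) hsurj s
  rw [hF, ZMod.card] at h
  have h2 : (2:ℕ) ^ m = 2 ^ (m - 1) * 2 := by
    rw [← pow_succ]; congr 1; omega
  rw [h2] at h
  exact Nat.eq_of_mul_eq_mul_right (by norm_num) h

noncomputable def trmul2 (u v : F) : F →+ ZMod 2 × ZMod 2 :=
  (trmul u).prod (trmul v)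

lemma count_two (m : ℕ) (hmo : Odd m) (hF : Fintype.card F = 2 ^ m) (hm : 2 ≤ m)
    (u v : F) (hu : u ≠ 0) (hv : v ≠ 0) (huv : u ≠ v) (s t : ZMod 2) :
    (univ.filter fun y => Tr (u * y) = s ∧ Tr (v * y) = t).card = 2 ^ (m - 2) := by
  obtain ⟨p, hp1, hp2⟩ := exists_one_zero m hmo hF u v hu hv huv
  obtain ⟨q, hq1, hq2⟩ := exists_one_zero m hmo hF v u hv hu (Ne.symm huv)
  have hsurj : Function.Surjective (trmul2 u v) := by
    intro z
    have hfp : trmul2 u v p = (1, 0) := Prod.ext hp1 hp2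
    have hfq : trmul2 u v q = (0, 1) := Prod.ext hq2 hq1
    obtain ⟨z1, z2⟩ := z
    rcases z01 z1 with h1 | h1 <;> rcases z01 z2 with h2 | h2 <;> subst h1 <;> subst h2
    · exact ⟨0, map_zero _⟩
    · exact ⟨q, hfq⟩
    · exact ⟨p, hfp⟩
    · exact ⟨p + q, by rw [map_add, hfp, hfq]; decide⟩
  have h := fiber_card_mul (trmul2 u v) hsurj (s, t)
  rw [hF] at h
  have hc4 : Fintype.card (ZMod 2 × ZMod 2) = 4 := by
    rw [Fintype.card_prod, ZMod.card]
  rw [hc4] at h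
  have hfilter : (univ.filter fun y => trmul2 u v y = (s, t))
      = (univ.filter fun y => Tr (u * y) = s ∧ Tr (v * y) = t) := by
    apply Finset.filter_congr
    intro y _
    constructor
    · intro hy; exact ⟨congrArg Prod.fst hy, congrArg Prod.snd hy⟩
    · intro hy; exact Prod.ext hy.1 hy.2
  rw [hfilter] at h
  have h2 : (2:ℕ) ^ m = 2 ^ (m - 2) * 4 := by
    rw [show (4:ℕ) = 2^2 by norm_num, ← pow_add]; congr 1; omega
  rw [h2] at h
  exact Nat.eq_of_mul_eq_mul_right (by norm_num) h

noncomputable def D1 (F : Type*) [Field F] [Fintype F] [Algebra (ZMod 2) F] (d : ℕ) :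
    Finset (F × F) :=
  univ.filter fun q => q.1 ≠ 0 ∧ Tr (q.1 ^ (d + 1) * q.2 + q.1 ^ d * q.2 + q.1) = 0

noncomputable def wt1 (d : ℕ) (a b : F) : ℕ :=
  ((D1 F d).filter fun q => Tr (a * q.1 ^ d * q.2 + b * q.1) = 1).card

noncomputable def N (d : ℕ) (a b x : F) : ℕ :=
  (univ.filter fun y : F =>
    (x ≠ 0 ∧ Tr (x ^ (d + 1) * y + x ^ d * y + x) = 0) ∧ Tr (a * x ^ d * y + b * x) = 1).card

lemma wt1_eq_sum (d : ℕ) (a b : F) : wt1 d a b = ∑ x : F, N d a b x := by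
  unfold wt1 D1
  rw [Finset.filter_filter]
  rw [Finset.card_eq_sum_card_fiberwise (f := Prod.fst) (t := univ) (fun x _ => mem_univ _)]
  apply Finset.sum_congr rfl
  intro x _
  rw [Finset.filter_filter]
  unfold N
  apply Finset.card_bij (fun q _ => q.2)
  · intro q hq
    simp only [mem_filter, mem_univ, true_and] at hq ⊢
    obtain ⟨⟨h1, h2⟩, h3⟩ := hq
    subst h3
    exact ⟨⟨h1.1, h1.2⟩, h2⟩
  · intro q1 h1 q2 h2 h
    simp only [mem_filter] at h1 h2
    exact Prod.ext (h1.2.2.trans h2.2.2.symm) h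
  · intro y hy
    simp only [mem_filter, mem_univ, true_and] at hy ⊢
    exact ⟨(x, y), ⟨⟨⟨hy.1.1, hy.1.2⟩, hy.2⟩, rfl⟩, rfl⟩

lemma N_zero (d : ℕ) (a b : F) : N d a b 0 = 0 := by
  unfold N
  rw [Finset.card_eq_zero]
  ext y
  simp only [mem_filter, mem_univ, true_and, Finset.notMem_empty, iff_false]
  rintro ⟨⟨h1, _⟩, _⟩
  exact h1 rfl

lemma N_one (m d : ℕ) (hmo : Odd m) (hF : Fintype.card F = 2 ^ m) (a b : F) :
    N d a b 1 = 0 := by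
  unfold N
  rw [Finset.card_eq_zero]
  ext y
  simp only [mem_filter, mem_univ, true_and, Finset.notMem_empty, iff_false]
  rintro ⟨⟨-, h2⟩, -⟩
  rw [show (1:F) ^ (d+1) * y + 1 ^ d * y + 1 = 2 * y + 1 by ring, two_eq_zero, zero_mul,
    zero_add, Tr_one m hmo hF] at h2
  exact one_ne_zero h2

lemma N_eq (d : ℕ) (a b x : F) (hx : x ≠ 0) :
    N d a b x = (univ.filter fun y : F =>
      Tr ((x ^ d * (x + 1)) * y) = Tr x ∧ Tr ((a * x ^ d) * y) = 1 + Tr (b * x)).card := by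
  unfold N
  congr 1
  apply Finset.filter_congr
  intro y _
  have e1 : x ^ (d+1) * y + x ^ d * y + x = (x ^ d * (x + 1)) * y + x := by ring
  have e2 : a * x ^ d * y + b * x = (a * x ^ d) * y + b * x := by ring
  rw [e1, e2, Tr_add, Tr_add]
  have k1 : ∀ z w : ZMod 2, z + w = 0 ↔ z = w := by decide
  have k2 : ∀ z w : ZMod 2, z + w = 1 ↔ z = 1 + w := by decide
  rw [k1, k2]
  exact ⟨fun h => ⟨h.1.2, h.2⟩, fun h => ⟨⟨hx, h.1⟩, h.2⟩⟩

lemma x1_ne (x : F) (hx1 : x ≠ 1) : x + 1 ≠ 0 := by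
  intro h
  exact hx1 (by linear_combination h - two_eq_zero (F := F))

lemma N_two (m d : ℕ) (hmo : Odd m) (hF : Fintype.card F = 2 ^ m) (hm : 2 ≤ m)
    (a b x : F) (ha : a ≠ 0) (hx0 : x ≠ 0) (hx1 : x ≠ 1) (hxa : x + 1 ≠ a) :
    N d a b x = 2 ^ (m - 2) := by
  rw [N_eq d a b x hx0]
  have hxd : x ^ d ≠ 0 := pow_ne_zero _ hx0
  have hu : x ^ d * (x + 1) ≠ 0 := mul_ne_zero hxd (x1_ne x hx1)
  have hv : a * x ^ d ≠ 0 := mul_ne_zero ha hxd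
  have huv : x ^ d * (x + 1) ≠ a * x ^ d := by
    intro h
    rw [mul_comm] at h
    exact hxa (mul_right_cancel₀ hxd h)
  exact count_two m hmo hF hm _ _ hu hv huv _ _

lemma N_a0 (m d : ℕ) (hmo : Odd m) (hF : Fintype.card F = 2 ^ m) (hm : 1 ≤ m)
    (b x : F) (hx0 : x ≠ 0) (hx1 : x ≠ 1) :
    N d 0 b x = if Tr (b * x) = 1 then 2 ^ (m - 1) else 0 := by
  rw [N_eq d 0 b x hx0]
  have hu : x ^ d * (x + 1) ≠ 0 := mul_ne_zero (pow_ne_zero _ hx0) (x1_ne x hx1)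
  by_cases hb : Tr (b * x) = 1
  · rw [if_pos hb]
    have heq : (univ.filter fun y : F =>
        Tr ((x ^ d * (x + 1)) * y) = Tr x ∧ Tr ((0 * x ^ d) * y) = 1 + Tr (b * x))
        = univ.filter fun y : F => Tr ((x ^ d * (x + 1)) * y) = Tr x := by
      apply Finset.filter_congr
      intro y _
      rw [zero_mul, zero_mul, Tr_zero, hb]
      simp only [and_iff_left_iff_imp]
      intro _
      decide
    rw [heq]
    exact count_one m hmo hF hm _ hu _
  · rw [if_neg hb]
    rw [Finset.card_eq_zero]
    ext y
    simp only [mem_filter, mem_univ, true_and, Finset.notMem_empty, iff_false]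
    rintro ⟨-, h2⟩
    rw [zero_mul, zero_mul, Tr_zero] at h2
    apply hb
    have : ∀ z : ZMod 2, 0 = 1 + z → z = 1 := by decide
    exact this _ h2

lemma N_sp (m d : ℕ) (hmo : Odd m) (hF : Fintype.card F = 2 ^ m) (hm : 1 ≤ m)
    (a b : F) (ha0 : a ≠ 0) (ha1 : a ≠ 1) :
    N d a b (a + 1) = if Tr ((a + 1) * (b + 1)) = 1 then 2 ^ (m - 1) else 0 := by
  have hx0 : a + 1 ≠ 0 := x1_ne a ha1
  have hx1 : a + 1 ≠ 1 := fun h => ha0 (by linear_combination h)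
  rw [N_eq d a b (a + 1) hx0]
  have he : (a + 1) + 1 = a := by linear_combination two_eq_zero (F := F)
  have hu : (a + 1) ^ d * a ≠ 0 := mul_ne_zero (pow_ne_zero _ hx0) ha0
  simp only [he, show a * (a + 1 : F) ^ d = (a + 1) ^ d * a from mul_comm _ _]
  have hrel : Tr ((a + 1) * (b + 1)) = Tr (b * (a + 1)) + Tr (a + 1) := by
    rw [show ((a + 1) * (b + 1) : F) = b * (a + 1) + (a + 1) by ring, Tr_add]
  by_cases hTr : Tr ((a + 1) * (b + 1)) = 1
  · rw [if_pos hTr]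
    rw [hTr] at hrel
    have hst : Tr (a + 1) = 1 + Tr (b * (a + 1)) := by
      have : ∀ z w : ZMod 2, 1 = w + z → z = 1 + w := by decide
      exact this _ _ hrel
    have heq : (univ.filter fun y : F =>
        Tr (((a + 1) ^ d * a) * y) = Tr (a + 1) ∧
          Tr (((a + 1) ^ d * a) * y) = 1 + Tr (b * (a + 1)))
        = univ.filter fun y : F => Tr (((a + 1) ^ d * a) * y) = Tr (a + 1) := by
      apply Finset.filter_congr
      intro y _
      rw [← hst, and_self]
    rw [heq]
    exact count_one m hmo hF hm _ hu _
  · rw [if_neg hTr]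
    rw [Finset.card_eq_zero]
    ext y
    simp only [mem_filter, mem_univ, true_and, Finset.notMem_empty, iff_false]
    rintro ⟨h1, h2⟩
    apply hTr
    rw [hrel, ← h1, h2]
    exact (by decide : ∀ w : ZMod 2, w + (1 + w) = 1) _

lemma wt1_a1 (m d : ℕ) (hmo : Odd m) (hF : Fintype.card F = 2 ^ m) (hm : 3 ≤ m) (b : F) :
    wt1 d (1 : F) b = (2 ^ m - 2) * 2 ^ (m - 2) := by
  rw [wt1_eq_sum]
  have h01 : (0 : F) ∉ ({1} : Finset F) := by
    simp only [Finset.mem_singleton]; exact zero_ne_one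
  rw [← Finset.sum_sdiff (Finset.subset_univ ({0, 1} : Finset F))]
  have hs2 : ∑ x ∈ ({0, 1} : Finset F), N d 1 b x = 0 := by
    rw [Finset.sum_insert h01, Finset.sum_singleton, N_zero, N_one m d hmo hF, add_zero]
  rw [hs2, add_zero]
  have hcongr : ∀ x ∈ univ \ ({0, 1} : Finset F), N d 1 b x = 2 ^ (m - 2) := by
    intro x hx
    rw [Finset.mem_sdiff, Finset.mem_insert, Finset.mem_singleton] at hx
    push_neg at hx
    obtain ⟨-, hx0, hx1⟩ := hx
    refine N_two m d hmo hF (by omega) 1 b x one_ne_zero hx0 hx1 ?_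
    intro h
    exact hx0 (by linear_combination h)
  rw [Finset.sum_congr rfl hcongr, Finset.sum_const, smul_eq_mul]
  congr 1
  rw [Finset.card_sdiff_of_subset (Finset.subset_univ _), Finset.card_univ, hF,
    Finset.card_insert_of_notMem h01, Finset.card_singleton]

lemma wt1_a0 (m d : ℕ) (hmo : Odd m) (hF : Fintype.card F = 2 ^ m) (hm : 3 ≤ m)
    (b : F) (hb : b ≠ 0) :
    wt1 d (0 : F) b = 2 ^ (m - 1) * (2 ^ (m - 1) - if Tr b = 1 then 1 else 0) := by
  rw [wt1_eq_sum]
  have h01 : (0 : F) ∉ ({1} : Finset F) := by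
    simp only [Finset.mem_singleton]; exact zero_ne_one
  rw [← Finset.sum_sdiff (Finset.subset_univ ({0, 1} : Finset F))]
  have hs2 : ∑ x ∈ ({0, 1} : Finset F), N d 0 b x = 0 := by
    rw [Finset.sum_insert h01, Finset.sum_singleton, N_zero, N_one m d hmo hF, add_zero]
  rw [hs2, add_zero]
  have hcongr : ∀ x ∈ univ \ ({0, 1} : Finset F), N d 0 b x
      = if Tr (b * x) = 1 then 2 ^ (m - 1) else 0 := by
    intro x hx
    rw [Finset.mem_sdiff, Finset.mem_insert, Finset.mem_singleton] at hx
    push_neg at hx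
    exact N_a0 m d hmo hF (by omega) b x hx.2.1 hx.2.2
  rw [Finset.sum_congr rfl hcongr, ← Finset.sum_filter, Finset.sum_const, smul_eq_mul, mul_comm]
  congr 1
  have hset : (univ \ ({0, 1} : Finset F)).filter (fun x => Tr (b * x) = 1)
      = (univ.filter fun x : F => Tr (b * x) = 1) \ ({0, 1} : Finset F) := by
    ext x
    simp only [Finset.mem_sdiff, Finset.mem_filter, mem_univ, true_and]
    tauto
  have hTcard : (univ.filter fun x : F => Tr (b * x) = 1).card = 2 ^ (m - 1) :=
    count_one m hmo hF (by omega) b hb 1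
  have hint : (univ.filter fun x : F => Tr (b * x) = 1) ∩ ({0, 1} : Finset F)
      = if Tr b = 1 then {1} else ∅ := by
    split_ifs with htb
    · ext x
      simp only [Finset.mem_inter, Finset.mem_filter, mem_univ, true_and,
        Finset.mem_insert, Finset.mem_singleton]
      constructor
      · rintro ⟨h1, (rfl | rfl)⟩
        · rw [mul_zero, Tr_zero] at h1; exact absurd h1 (by decide)
        · rfl
      · rintro rfl
        exact ⟨by rwa [mul_one], Or.inr rfl⟩
    · ext x
      simp only [Finset.mem_inter, Finset.mem_filter, mem_univ, true_and,
        Finset.mem_insert, Finset.mem_singleton, Finset.notMem_empty, iff_false, not_and]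
      rintro h1 (rfl | rfl)
      · rw [mul_zero, Tr_zero] at h1; exact absurd h1 (by decide)
      · rw [mul_one] at h1; exact htb h1
  have hkey := Finset.card_sdiff_add_card_inter
    (univ.filter fun x : F => Tr (b * x) = 1) ({0, 1} : Finset F)
  rw [hset, hint] at *
  split_ifs at hkey ⊢ with htb
  · rw [Finset.card_singleton] at hkey; omega
  · rw [Finset.card_empty] at hkey; omega

lemma wt1_an (m d : ℕ) (hmo : Odd m) (hF : Fintype.card F = 2 ^ m) (hm : 3 ≤ m)
    (a b : F) (ha0 : a ≠ 0) (ha1 : a ≠ 1) :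
    wt1 d a b = (2 ^ m - 3) * 2 ^ (m - 2)
      + (if Tr ((a + 1) * (b + 1)) = 1 then 2 ^ (m - 1) else 0) := by
  rw [wt1_eq_sum]
  have hx0 : a + 1 ≠ 0 := x1_ne a ha1
  have hx1 : a + 1 ≠ 1 := fun h => ha0 (by linear_combination h)
  have h1s : (1 : F) ∉ ({a + 1} : Finset F) := by
    simp only [Finset.mem_singleton]; exact fun h => hx1 h.symm
  have h0s : (0 : F) ∉ (insert 1 {a + 1} : Finset F) := by
    simp only [Finset.mem_insert, Finset.mem_singleton]
    push_neg
    exact ⟨zero_ne_one, fun h => hx0 h.symm⟩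
  rw [← Finset.sum_sdiff (Finset.subset_univ ({0, 1, a + 1} : Finset F))]
  have hs3 : ∑ x ∈ ({0, 1, a + 1} : Finset F), N d a b x
      = if Tr ((a + 1) * (b + 1)) = 1 then 2 ^ (m - 1) else 0 := by
    rw [show ({0, 1, a + 1} : Finset F) = insert 0 (insert 1 {a + 1}) from rfl,
      Finset.sum_insert h0s, Finset.sum_insert h1s, Finset.sum_singleton,
      N_zero, N_one m d hmo hF, N_sp m d hmo hF (by omega) a b ha0 ha1, zero_add, zero_add]
  rw [hs3]
  congr 1
  have hcongr : ∀ x ∈ univ \ ({0, 1, a + 1} : Finset F), N d a b x = 2 ^ (m - 2) := by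
    intro x hx
    rw [Finset.mem_sdiff, Finset.mem_insert, Finset.mem_insert, Finset.mem_singleton] at hx
    push_neg at hx
    obtain ⟨-, hx0', hx1', hxa⟩ := hx
    refine N_two m d hmo hF (by omega) a b x ha0 hx0' hx1' ?_
    intro h
    exact hxa (by linear_combination h - two_eq_zero (F := F))
  rw [Finset.sum_congr rfl hcongr, Finset.sum_const, smul_eq_mul]
  congr 1
  rw [Finset.card_sdiff_of_subset (Finset.subset_univ _), Finset.card_univ, hF]
  congr 1
  rw [show ({0, 1, a + 1} : Finset F) = insert 0 (insert 1 {a + 1}) from rfl,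
    Finset.card_insert_of_notMem h0s, Finset.card_insert_of_notMem h1s, Finset.card_singleton]

theorem stmt13 (m d : ℕ) (hm : 3 ≤ m) (hmo : Odd m) (hd : 1 ≤ d)
    (hF : Fintype.card F = 2 ^ m) (a b : F) (hab : (a, b) ≠ (0, 0)) :
    (a ≠ 0 → a ≠ 1 → Tr ((a + 1) * (b + 1)) = 0 →
      wt1 d a b = 2 ^ (m - 2) * (2 ^ m - 3)) ∧
    ((a = 1 ∨ (a = 0 ∧ b ≠ 0 ∧ Tr (b + 1) = 0)) →
      wt1 d a b = 2 ^ (m - 1) * (2 ^ (m - 1) - 1)) ∧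
    (a ≠ 0 → a ≠ 1 → Tr ((a + 1) * (b + 1)) = 1 →
      wt1 d a b = 2 ^ (m - 2) * (2 ^ m - 1)) ∧
    (a = 0 → b ≠ 0 → Tr (b + 1) = 1 → wt1 d a b = 2 ^ (2 * m - 2)) := by
  have hk1 : 1 ≤ (2:ℕ) ^ (m - 2) := Nat.one_le_two_pow
  have e1 : (2:ℕ) ^ (m - 1) = 2 * 2 ^ (m - 2) := by
    rw [← pow_succ']; congr 1; omega
  have e2 : (2:ℕ) ^ m = 4 * 2 ^ (m - 2) := by
    rw [show (4:ℕ) = 2^2 by norm_num, ← pow_add]; congr 1; omega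
  have hTrb1 : ∀ c : F, Tr (c + 1) = Tr c + 1 := by
    intro c; rw [Tr_add, Tr_one m hmo hF]
  refine ⟨?_, ?_, ?_, ?_⟩
  · intro ha0 ha1 hT
    rw [wt1_an m d hmo hF hm a b ha0 ha1, if_neg (by rw [hT]; decide), add_zero, mul_comm]
  · rintro (rfl | ⟨rfl, hb, hT⟩)
    · rw [wt1_a1 m d hmo hF hm b, e1, e2]
      zify [show (2:ℕ) ≤ 4 * 2 ^ (m-2) by omega, show (1:ℕ) ≤ 2 * 2 ^ (m-2) by omega]
      ring
    · have htb : Tr b = 1 := by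
        rw [hTrb1 b] at hT
        exact (by decide : ∀ z : ZMod 2, z + 1 = 0 → z = 1) _ hT
      rw [wt1_a0 m d hmo hF hm b hb, if_pos htb]
  · intro ha0 ha1 hT
    rw [wt1_an m d hmo hF hm a b ha0 ha1, if_pos hT, e1, e2]
    zify [show (3:ℕ) ≤ 4 * 2 ^ (m-2) by omega, show (1:ℕ) ≤ 4 * 2 ^ (m-2) by omega]
    ring
  · rintro rfl hb hT
    have htb : Tr b ≠ 1 := by
      rw [hTrb1 b] at hT
      exact (by decide : ∀ z : ZMod 2, z + 1 = 1 → z ≠ 1) _ hT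
    rw [wt1_a0 m d hmo hF hm b hb, if_neg htb, Nat.sub_zero, ← pow_add]
    congr 1
    omega
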